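/- Let R be a commutative ring with identity which is not a field, in which every nonzero ideal contains a minimal ideal, and let 𝓜 be the set of all minimal ideals of R. Then 𝓜 is a dominating set of SII(R) (every nonzero proper ideal of R not belonging to 𝓜 is adjacent in SII(R) to some element of 𝓜), and 𝓜 is a minimal dominating set (no proper subset of 𝓜 is a dominating set of SII(R)). -/

import Mathlib

open Pointwise

/-- An ideal `I` of a commutative ring `R` is a *second ideal* if `I ≠ (0)` and
for every `r : R`, either `r • I = (0)` or `r • I = I`. -/
def IsSecondIdeal {R : Type*} [CommRing R] (I : Ideal R) : Prop :=
  I ≠ ⊥ ∧ ∀ r : R, r • I = ⊥ ∨ r • I = I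

/-- The *second ideal intersection graph* `SII R`: vertices are the nonzero proper
ideals of `R`, and two distinct vertices `I`, `J` are adjacent iff `I ⊓ J` is a
second ideal of `R`. -/
def SII (R : Type*) [CommRing R] : SimpleGraph {I : Ideal R // I ≠ ⊥ ∧ I ≠ ⊤} where
  Adj I J := I ≠ J ∧ IsSecondIdeal (I.1 ⊓ J.1)
  symm := ⟨fun I J h => ⟨h.1.symm, by rw [inf_comm]; exact h.2⟩⟩
  loopless := ⟨fun I h => h.1 rfl⟩
/-- A *minimal ideal* of `R`: a nonzero ideal `M` such that the only ideals
contained in `M` are `(0)` and `M`. -/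
def IsMinimalIdeal {R : Type*} [CommRing R] (M : Ideal R) : Prop :=
  M ≠ ⊥ ∧ ∀ J : Ideal R, J ≤ M → J = ⊥ ∨ J = M


lemma minimal_second {R : Type*} [CommRing R] {M : Ideal R} (hM : IsMinimalIdeal M) :
    IsSecondIdeal M := by
  refine ⟨hM.1, fun r => ?_⟩
  apply hM.2
  intro x hx
  rw [← SetLike.mem_coe, Submodule.coe_pointwise_smul] at hx
  obtain ⟨y, hy, rfl⟩ := hx
  exact M.smul_mem r hy

/-- Let `R` be a commutative ring which is not a field and in which
every nonzero ideal contains a minimal ideal, and let `𝓜` be the set of vertices of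
`SII R` that are minimal ideals. Then `𝓜` is a dominating set of `SII R`, and no
proper subset of `𝓜` is a dominating set. -/
theorem stmt16 (R : Type*) [CommRing R] (hfield : ¬ IsField R)
    (hmin : ∀ I : Ideal R, I ≠ ⊥ → ∃ M : Ideal R, IsMinimalIdeal M ∧ M ≤ I)
    (𝓜 : Set {I : Ideal R // I ≠ ⊥ ∧ I ≠ ⊤})
    (h𝓜 : 𝓜 = {v : {I : Ideal R // I ≠ ⊥ ∧ I ≠ ⊤} | IsMinimalIdeal v.1}) :
    (∀ v : {I : Ideal R // I ≠ ⊥ ∧ I ≠ ⊤}, v ∉ 𝓜 → ∃ w ∈ 𝓜, (SII R).Adj v w) ∧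
    (∀ D : Set {I : Ideal R // I ≠ ⊥ ∧ I ≠ ⊤}, D ⊂ 𝓜 →
      ¬ ∀ v : {I : Ideal R // I ≠ ⊥ ∧ I ≠ ⊤}, v ∉ D → ∃ w ∈ D, (SII R).Adj v w) := by
  subst h𝓜
  constructor
  · intro v hv
    obtain ⟨M, hMmin, hMle⟩ := hmin v.1 v.2.1
    have hMtop : M ≠ ⊤ := fun h => v.2.2 (top_le_iff.mp (h ▸ hMle))
    refine ⟨⟨M, hMmin.1, hMtop⟩, hMmin, ?_, ?_⟩
    · intro h
      exact hv (by rw [h]; exact hMmin)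
    · rw [inf_eq_right.mpr hMle]
      exact minimal_second hMmin
  · intro D hD hdom
    obtain ⟨m, hm𝓜, hmD⟩ := Set.exists_of_ssubset hD
    obtain ⟨w, hwD, hne, hsec⟩ := hdom m hmD
    have hwmin : IsMinimalIdeal w.1 := hD.1 hwD
    have h1 : m.1 ⊓ w.1 = m.1 := by
      rcases hm𝓜.2 (m.1 ⊓ w.1) inf_le_left with h | h
      · exact absurd h hsec.1
      · exact h
    have h2 : m.1 ≤ w.1 := by rw [← h1]; exact inf_le_right
    rcases hwmin.2 m.1 h2 with h | h
    · exact hm𝓜.1 h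
    · exact hne (Subtype.ext h)
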